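/- arXiv:2005.06757 — 2 statements merged into one kernel-verified Lean document; each statement's English description precedes it below -/
import Mathlib

section
/- Weighted single-coupling cosh–sinh inequality (intermediate step): Let B ⊆ V with λ_B > 0, and suppose P_B satisfies the density-ratio condition with parameter b ∈ ℝ. Then for any measurable f with f(J) ≥ 0 and f(flip_B J) = f(J) for all J, one has E[ f(J) ( cosh(2βλ_B J_B) − ⟨σ_B⟩_J sinh(2βλ_B J_B) ) ] ≥ E[ f(J) exp(−b J_B) ]. -/
open MeasureTheory Real

variable {V : Type*}

/-- Spin value of a configuration at a site: `+1` or `-1`. -/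
noncomputable def spin (σ : V → Bool) (i : V) : ℝ := if σ i then 1 else -1

/-- `σ_A = ∏_{i ∈ A} σ_i`. -/
noncomputable def sigmaA (A : Finset V) (σ : V → Bool) : ℝ := ∏ i ∈ A, spin σ i

/-- `β Σ_A λ_A J_A σ_A` (minus the Hamiltonian, times β). -/
noncomputable def energy [Fintype V] [DecidableEq V] (β : ℝ) (lam J : Finset V → ℝ)
    (σ : V → Bool) : ℝ := β * ∑ A : Finset V, lam A * J A * sigmaA A σ

/-- Partition function `Z_J`. -/
noncomputable def Zfun [Fintype V] [DecidableEq V] (β : ℝ) (lam J : Finset V → ℝ) : ℝ :=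
  ∑ σ : V → Bool, Real.exp (energy β lam J σ)

/-- Gibbs expectation `⟨σ_B⟩_J`. -/
noncomputable def corr [Fintype V] [DecidableEq V] (β : ℝ) (lam J : Finset V → ℝ)
    (B : Finset V) : ℝ :=
  (∑ σ : V → Bool, sigmaA B σ * Real.exp (energy β lam J σ)) / Zfun β lam J

/-- Gibbs expectation `⟨σ_B σ_C⟩_J`. -/
noncomputable def corr2 [Fintype V] [DecidableEq V] (β : ℝ) (lam J : Finset V → ℝ)
    (B C : Finset V) : ℝ :=
  (∑ σ : V → Bool, sigmaA B σ * sigmaA C σ * Real.exp (energy β lam J σ)) / Zfun β lam J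

/-- Negate the coupling indexed by `B`. -/
noncomputable def flipJ [DecidableEq V] (B : Finset V) (J : Finset V → ℝ) : Finset V → ℝ :=
  Function.update J B (-(J B))

/-- The density-ratio condition `P(-x) = exp(-2 b x) P(x)`: the pushforward of `P` under
negation equals the measure with density `x ↦ exp (-2 b x)` with respect to `P`. -/
def densityRatio (P : Measure ℝ) (b : ℝ) : Prop :=
  P.map (fun x => -x) = P.withDensity (fun x => ENNReal.ofReal (Real.exp (-2 * b * x)))

section Core
variable [Fintype V] [DecidableEq V]

omit [Fintype V] in
lemma flipJ_flip_flip (B : Finset V) (J : Finset V → ℝ) : flipJ B (flipJ B J) = J := by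
  simp [flipJ, Function.update_self, Function.update_idem]

omit [Fintype V] in
lemma measurable_flipJ (B : Finset V) : Measurable (flipJ B (V := V)) := by
  apply measurable_pi_iff.mpr
  intro A
  by_cases h : A = B
  · subst h
    have hA : (fun J : Finset V → ℝ => flipJ A J A) = fun J => -(J A) := by
      funext J; simp [flipJ]
    rw [hA]
    exact (measurable_pi_apply A).neg
  · have hA : (fun J : Finset V → ℝ => flipJ B J A) = fun J => J A := by
      funext J; simp [flipJ, Function.update_of_ne h]
    rw [hA]
    exact measurable_pi_apply A

open ENNReal in
lemma flip_lintegral (P : Finset V → Measure ℝ) [∀ A, IsProbabilityMeasure (P A)]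
    (B : Finset V) (b : ℝ) (hPB : densityRatio (P B) b)
    (g : (Finset V → ℝ) → ℝ≥0∞) (hg : Measurable g) :
    ∫⁻ J, g (flipJ B J) ∂(Measure.pi P)
      = ∫⁻ J, ENNReal.ofReal (Real.exp (-2 * b * J B)) * g J ∂(Measure.pi P) := by
  classical
  have mp1 := measurePreserving_piEquivPiSubtypeProd P (fun A => A = B)
  set ν₂ := Measure.pi (fun i : {A : Finset V // ¬ A = B} => P i.val) with hν₂
  let u := MeasurableEquiv.funUnique {A : Finset V // A = B} ℝ
  let e := MeasurableEquiv.piEquivPiSubtypeProd (fun _ : Finset V => ℝ) (fun A => A = B)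
  let T := e.trans (u.prodCongr (MeasurableEquiv.refl ({A : Finset V // ¬ A = B} → ℝ)))
  have mpT : MeasurePreserving T (Measure.pi P) ((P B).prod ν₂) := by
    rw [show (⇑T) = (Prod.map (⇑u) id) ∘ ⇑e from rfl]
    refine MeasurePreserving.comp (MeasurePreserving.prod ?_ (MeasurePreserving.id ν₂)) mp1
    have hPi1 : (fun i : {A : Finset V // A = B} => P i.val) = fun _ => P B :=
      funext fun i => by rw [i.2]
    rw [hPi1]
    convert measurePreserving_funUnique (P B) {A : Finset V // A = B} using 2
  have hT1 : ∀ J : Finset V → ℝ, (T J).1 = J B := fun J => rfl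
  have hTflip : ∀ J : Finset V → ℝ, T (flipJ B J) = (-(J B), (T J).2) := by
    intro J
    have h1 : (T (flipJ B J)).1 = -(J B) := by
      rw [hT1]; simp [flipJ]
    have h2 : (T (flipJ B J)).2 = (T J).2 := by
      funext i
      show flipJ B J i.val = J i.val
      simp [flipJ, Function.update_of_ne i.2]
    exact Prod.ext h1 h2
  set ρ : ℝ → ℝ≥0∞ := fun x => ENNReal.ofReal (Real.exp (-2 * b * x)) with hρ
  have hρmeas : Measurable ρ := by
    apply Measurable.ennreal_ofReal
    exact (measurable_id.const_mul (-2 * b)).exp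
  have hG : Measurable (g ∘ T.symm) := hg.comp T.symm.measurable
  have hc : Measurable fun p : ℝ × ({A : Finset V // ¬ A = B} → ℝ) =>
      (g ∘ T.symm) (Prod.map Neg.neg id p) :=
    hG.comp (measurable_neg.prodMap measurable_id)
  have hunc : Measurable (Function.uncurry fun (x : ℝ) (y : {A : Finset V // ¬ A = B} → ℝ) =>
      (g ∘ T.symm) (x, y)) := hG.comp (measurable_fst.prodMk measurable_snd)
  have Hmeas : Measurable fun x : ℝ => ∫⁻ y, (g ∘ T.symm) (x, y) ∂ν₂ :=
    Measurable.lintegral_prod_right hunc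
  have hd : Measurable fun p : ℝ × ({A : Finset V // ¬ A = B} → ℝ) =>
      ρ p.1 * (g ∘ T.symm) p := (hρmeas.comp measurable_fst).mul hG
  calc ∫⁻ J, g (flipJ B J) ∂(Measure.pi P)
      = ∫⁻ J, (fun p => (g ∘ T.symm) (Prod.map Neg.neg id p)) (T J) ∂(Measure.pi P) := by
        apply lintegral_congr; intro J
        have hPm : Prod.map Neg.neg id (T J) = T (flipJ B J) := by
          rw [hTflip J]
          refine Prod.ext ?_ ?_ <;> simp [hT1 J]
        simp only [hPm, Function.comp_apply, MeasurableEquiv.symm_apply_apply]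
    _ = ∫⁻ p, (fun p => (g ∘ T.symm) (Prod.map Neg.neg id p)) p ∂((P B).prod ν₂) :=
        mpT.lintegral_comp hc
    _ = ∫⁻ x, ∫⁻ y, (g ∘ T.symm) (Prod.map Neg.neg id (x, y)) ∂ν₂ ∂(P B) :=
        lintegral_prod _ hc.aemeasurable
    _ = ∫⁻ x, (fun x => ∫⁻ y, (g ∘ T.symm) (x, y) ∂ν₂) (-x) ∂(P B) := rfl
    _ = ∫⁻ x, (fun x => ∫⁻ y, (g ∘ T.symm) (x, y) ∂ν₂) x ∂((P B).map (fun x => -x)) :=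
        (lintegral_map Hmeas measurable_neg).symm
    _ = ∫⁻ x, ρ x * ∫⁻ y, (g ∘ T.symm) (x, y) ∂ν₂ ∂(P B) := by
        rw [hPB, lintegral_withDensity_eq_lintegral_mul (P B) hρmeas Hmeas]
        rfl
    _ = ∫⁻ x, ∫⁻ y, ρ x * (g ∘ T.symm) (x, y) ∂ν₂ ∂(P B) := by
        apply lintegral_congr; intro x
        have hx : Measurable fun y : {A : Finset V // ¬ A = B} → ℝ => (g ∘ T.symm) (x, y) :=
          hG.comp measurable_prodMk_left
        exact (lintegral_const_mul (ρ x) hx).symm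
    _ = ∫⁻ p, ρ p.1 * (g ∘ T.symm) p ∂((P B).prod ν₂) :=
        (lintegral_prod _ hd.aemeasurable).symm
    _ = ∫⁻ J, (fun p => ρ p.1 * (g ∘ T.symm) p) (T J) ∂(Measure.pi P) :=
        (mpT.lintegral_comp hd).symm
    _ = ∫⁻ J, ENNReal.ofReal (Real.exp (-2 * b * J B)) * g J ∂(Measure.pi P) := by
        apply lintegral_congr; intro J
        simp only [hT1, hρ, Function.comp_apply, MeasurableEquiv.symm_apply_apply]


lemma sigmaA_pm (A : Finset V) (σ : V → Bool) : sigmaA A σ = 1 ∨ sigmaA A σ = -1 := by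
  refine Finset.prod_induction _ (fun x => x = 1 ∨ x = -1) ?_ (Or.inl rfl) ?_
  · rintro a b (ha | ha) (hb | hb) <;> simp [ha, hb]
  · intro i _; by_cases h : σ i <;> simp [spin, h]

lemma Zfun_pos (β : ℝ) (lam J : Finset V → ℝ) : 0 < Zfun β lam J := by
  apply Finset.sum_pos (fun σ _ => Real.exp_pos _)
  exact Finset.univ_nonempty

lemma energy_flip (β : ℝ) (lam J : Finset V → ℝ) (B : Finset V) (σ : V → Bool) :
    energy β lam (flipJ B J) σ
      = energy β lam J σ - 2 * β * lam B * J B * sigmaA B σ := by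
  unfold energy
  have h : ∀ A : Finset V, lam A * flipJ B J A * sigmaA A σ
      = lam A * J A * sigmaA A σ
        + (if A = B then -(2 * (lam B * J B * sigmaA B σ)) else 0) := by
    intro A
    by_cases h : A = B
    · subst h; simp only [flipJ, Function.update_self, eq_self_iff_true, if_true]; ring
    · simp [flipJ, Function.update_of_ne h, h]
  simp only [h, Finset.sum_add_distrib, Finset.sum_ite_eq', Finset.mem_univ, if_true]
  ring

lemma exp_energy_flip (β : ℝ) (lam J : Finset V → ℝ) (B : Finset V) (σ : V → Bool) :
    Real.exp (energy β lam (flipJ B J) σ) = Real.exp (energy β lam J σ) *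
      (Real.cosh (2 * β * lam B * J B) - sigmaA B σ * Real.sinh (2 * β * lam B * J B)) := by
  rw [energy_flip]
  rcases sigmaA_pm B σ with h | h
  · rw [h, mul_one, one_mul, Real.cosh_sub_sinh, ← Real.exp_add, sub_eq_add_neg]
  · rw [h, mul_neg_one, sub_neg_eq_add, neg_one_mul, sub_neg_eq_add, Real.cosh_add_sinh,
      ← Real.exp_add]

lemma Zfun_flip (β : ℝ) (lam J : Finset V → ℝ) (B : Finset V) :
    Zfun β lam (flipJ B J) = Zfun β lam J * Real.cosh (2 * β * lam B * J B)
      - (∑ σ : V → Bool, sigmaA B σ * Real.exp (energy β lam J σ))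
        * Real.sinh (2 * β * lam B * J B) := by
  unfold Zfun
  rw [show (∑ σ : V → Bool, Real.exp (energy β lam (flipJ B J) σ))
      = ∑ σ : V → Bool, (Real.exp (energy β lam J σ) * Real.cosh (2 * β * lam B * J B)
        - sigmaA B σ * Real.exp (energy β lam J σ) * Real.sinh (2 * β * lam B * J B)) from
    Finset.sum_congr rfl fun σ _ => by rw [exp_energy_flip]; ring]
  rw [Finset.sum_sub_distrib, ← Finset.sum_mul, ← Finset.sum_mul]

lemma coshsinh_eq (β : ℝ) (lam J : Finset V → ℝ) (B : Finset V) :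
    Real.cosh (2 * β * lam B * J B) - corr β lam J B * Real.sinh (2 * β * lam B * J B)
      = Zfun β lam (flipJ B J) / Zfun β lam J := by
  have hZ : Zfun β lam J ≠ 0 := ne_of_gt (Zfun_pos β lam J)
  rw [corr, Zfun_flip]
  field_simp

lemma measurable_energy (β : ℝ) (lam : Finset V → ℝ) (σ : V → Bool) :
    Measurable fun J : Finset V → ℝ => energy β lam J σ := by
  apply Measurable.const_mul
  exact Finset.measurable_sum _ fun A _ =>
    ((measurable_pi_apply (X := fun _ : Finset V => ℝ) A).const_mul (lam A)).mul_const _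

lemma measurable_Zfun (β : ℝ) (lam : Finset V → ℝ) :
    Measurable fun J : Finset V → ℝ => Zfun β lam J :=
  Finset.measurable_sum _ fun σ _ => (measurable_energy β lam σ).exp

lemma amgm_aux (f c z z' : ℝ) (hf : 0 ≤ f) (hc : 0 < c) (hz : 0 < z) (hz' : 0 < z') :
    2 * (f * c) ≤ f * (z' / z) + c ^ 2 * (f * (z / z')) := by
  have key : f * (z' / z) + c ^ 2 * (f * (z / z')) - 2 * (f * c)
      = f * ((z' - c * z) ^ 2 / (z * z')) := by
    field_simp
    ring
  have hpos : 0 ≤ f * ((z' - c * z) ^ 2 / (z * z')) := by positivity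
  linarith


end Core

/-- Weighted single-coupling cosh–sinh inequality (intermediate step). -/
theorem weighted_cosh_sinh_inequality [Fintype V] [DecidableEq V]
    (β : ℝ) (hβ : 0 < β) (lam : Finset V → ℝ)
    (P : Finset V → Measure ℝ) [∀ A, IsProbabilityMeasure (P A)]
    (B : Finset V) (hlamB : 0 < lam B) (b : ℝ) (hPB : densityRatio (P B) b)
    (f : (Finset V → ℝ) → ℝ) (hf : Measurable f)
    (hf0 : ∀ J, 0 ≤ f J)
    (hfflip : ∀ J, f (flipJ B J) = f J)
    (hint1 : Integrable (fun J => f J * (Real.cosh (2 * β * lam B * J B) -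
      corr β lam J B * Real.sinh (2 * β * lam B * J B))) (Measure.pi P))
    (hint2 : Integrable (fun J => f J * Real.exp (-b * J B)) (Measure.pi P)) :
    ∫ J, f J * Real.exp (-b * J B) ∂(Measure.pi P) ≤
      ∫ J, f J * (Real.cosh (2 * β * lam B * J B) -
        corr β lam J B * Real.sinh (2 * β * lam B * J B)) ∂(Measure.pi P) := by
  classical
  set mP := Measure.pi P with hπdef
  set φ := fun J : Finset V → ℝ => f J * (Zfun β lam (flipJ B J) / Zfun β lam J) with hφdef
  set ψ := fun J : Finset V → ℝ => f J * Real.exp (-b * J B) with hψdef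
  have hWeq : (fun J : Finset V → ℝ => f J * (Real.cosh (2 * β * lam B * J B) -
      corr β lam J B * Real.sinh (2 * β * lam B * J B))) = φ :=
    funext fun J => by rw [coshsinh_eq]
  have hint1' : Integrable φ mP := by rwa [hWeq] at hint1
  have hmφ : Measurable φ :=
    hf.mul (((measurable_Zfun β lam).comp (measurable_flipJ B)).div (measurable_Zfun β lam))
  have hmψ : Measurable ψ := hf.mul (((measurable_pi_apply (X := fun _ : Finset V => ℝ) B).const_mul (-b)).exp)
  have hφ0 : ∀ J, 0 ≤ φ J := fun J =>
    mul_nonneg (hf0 J) (le_of_lt (div_pos (Zfun_pos β lam _) (Zfun_pos β lam _)))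
  have hψ0 : ∀ J, 0 ≤ ψ J := fun J => mul_nonneg (hf0 J) (le_of_lt (Real.exp_pos _))
  set g : (Finset V → ℝ) → ENNReal :=
    fun J => ENNReal.ofReal (f J * (Zfun β lam J / Zfun β lam (flipJ B J))) with hgdef
  have hmg : Measurable g :=
    (hf.mul ((measurable_Zfun β lam).div
      ((measurable_Zfun β lam).comp (measurable_flipJ B)))).ennreal_ofReal
  have hgflip : ∀ J, g (flipJ B J) = ENNReal.ofReal (φ J) := by
    intro J
    simp only [hgdef, hφdef, flipJ_flip_flip, hfflip]
  have key : ∫⁻ J, ENNReal.ofReal (φ J) ∂mP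
      = ∫⁻ J, ENNReal.ofReal (Real.exp (-2 * b * J B)) * g J ∂mP := by
    rw [← flip_lintegral P B b hPB g hmg]
    exact lintegral_congr fun J => (hgflip J).symm
  have hpt : ∀ J, ENNReal.ofReal (2 * ψ J) ≤ ENNReal.ofReal (φ J)
      + ENNReal.ofReal (Real.exp (-2 * b * J B)) * g J := by
    intro J
    rw [hgdef, ← ENNReal.ofReal_mul (le_of_lt (Real.exp_pos _)),
      ← ENNReal.ofReal_add (hφ0 J) (mul_nonneg (le_of_lt (Real.exp_pos _))
        (mul_nonneg (hf0 J) (le_of_lt (div_pos (Zfun_pos β lam _) (Zfun_pos β lam _)))))]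
    apply ENNReal.ofReal_le_ofReal
    have hexp2 : Real.exp (-2 * b * J B) = Real.exp (-b * J B) ^ 2 := by
      rw [sq, ← Real.exp_add]; ring_nf
    rw [hψdef, hφdef, hexp2]
    exact amgm_aux (f J) (Real.exp (-b * J B)) (Zfun β lam J) (Zfun β lam (flipJ B J))
      (hf0 J) (Real.exp_pos _) (Zfun_pos β lam J) (Zfun_pos β lam _)
  set Lφ := ∫⁻ J, ENNReal.ofReal (φ J) ∂mP with hLφ
  set Lψ := ∫⁻ J, ENNReal.ofReal (ψ J) ∂mP with hLψ
  have hLφtop : Lφ ≠ ⊤ := ne_of_lt hint1'.lintegral_lt_top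
  have h2 : 2 * Lψ ≤ 2 * Lφ := by
    calc 2 * Lψ = ∫⁻ J, ENNReal.ofReal (2 * ψ J) ∂mP := by
          rw [hLψ, ← lintegral_const_mul 2 hmψ.ennreal_ofReal]
          exact lintegral_congr fun J => by
            rw [ENNReal.ofReal_mul (by norm_num : (0:ℝ) ≤ 2)]
            norm_num
      _ ≤ ∫⁻ J, (ENNReal.ofReal (φ J)
            + ENNReal.ofReal (Real.exp (-2 * b * J B)) * g J) ∂mP := lintegral_mono hpt
      _ = Lφ + ∫⁻ J, ENNReal.ofReal (Real.exp (-2 * b * J B)) * g J ∂mP :=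
          lintegral_add_left hmφ.ennreal_ofReal _
      _ = Lφ + Lφ := by rw [← key]
      _ = 2 * Lφ := by rw [two_mul]
  have hle : Lψ ≤ Lφ :=
    (ENNReal.mul_le_mul_iff_right (by norm_num) (by norm_num)).mp h2
  have hEψ : ∫ J, ψ J ∂mP = Lψ.toReal :=
    integral_eq_lintegral_of_nonneg_ae (Filter.Eventually.of_forall hψ0)
      hmψ.aestronglyMeasurable
  have hEφ : ∫ J, φ J ∂mP = Lφ.toReal :=
    integral_eq_lintegral_of_nonneg_ae (Filter.Eventually.of_forall hφ0)
      hmφ.aestronglyMeasurable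
  calc ∫ J, ψ J ∂mP = Lψ.toReal := hEψ
    _ ≤ Lφ.toReal := ENNReal.toReal_le_toReal (ne_top_of_le_ne_top hLφtop hle) hLφtop |>.mpr hle
    _ = ∫ J, φ J ∂mP := hEφ.symm
    _ = _ := by rw [hWeq]
end

section
/- Nonnegativity of the bound (Remark after the Corollary): Let B, C ⊆ V with B ≠ C, λ_B > 0, λ_C > 0, and suppose both P_B and P_C are symmetric. Then E[ J_B J_C ( (tanh(βλ_B J_B) − ⟨σ_B⟩_J) / tanh(2βλ_C J_C) + (tanh(βλ_C J_C) − ⟨σ_C⟩_J) / tanh(2βλ_B J_B) ) ] ≥ 0, where J_C / tanh(2βλ_C J_C) is interpreted by its continuous extension 1/(2βλ_C) at J_C = 0, and similarly for B. -/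
open MeasureTheory Real

variable {V : Type*}

/-- `x / sinh (a x)`, extended continuously by `1 / a` at `x = 0`. -/
noncomputable def qsinh (a x : ℝ) : ℝ :=
  if x = 0 then 1 / a else x / Real.sinh (a * x)

/-- `x / tanh (a x)`, extended continuously by `1 / a` at `x = 0`. -/
noncomputable def qtanh (a x : ℝ) : ℝ :=
  if x = 0 then 1 / a else x / Real.tanh (a * x)

set_option linter.unusedSectionVars false

section Aux
variable [Fintype V] [DecidableEq V]

lemma sigmaA_sq (B : Finset V) (σ : V → Bool) : sigmaA B σ * sigmaA B σ = 1 := by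
  unfold sigmaA
  rw [← Finset.prod_mul_distrib]
  refine Finset.prod_eq_one fun i _ => ?_
  unfold spin; by_cases h : σ i <;> simp [h]

lemma sigmaA_cases (B : Finset V) (σ : V → Bool) : sigmaA B σ = 1 ∨ sigmaA B σ = -1 :=
  mul_self_eq_one_iff.mp (sigmaA_sq B σ)

lemma energy_decomp (β : ℝ) (lam J : Finset V → ℝ) (B : Finset V) (σ : V → Bool) :
    energy β lam J σ =
      β * lam B * J B * sigmaA B σ + energy β lam (Function.update J B 0) σ := by
  unfold energy
  have : ∀ A : Finset V, lam A * J A * sigmaA A σ =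
      (if A = B then lam B * J B * sigmaA B σ else 0)
        + lam A * Function.update J B 0 A * sigmaA A σ := by
    intro A
    by_cases h : A = B <;> simp [h, Function.update_apply]
  rw [Finset.sum_congr rfl (fun A _ => this A), Finset.sum_add_distrib, Finset.sum_ite_eq']
  simp; ring

lemma Zsum (β : ℝ) (lam J : Finset V → ℝ) (B : Finset V) :
    Zfun β lam J =
      Real.cosh (β * lam B * J B) * Zfun β lam (Function.update J B 0)
      + Real.sinh (β * lam B * J B) *
          (∑ σ : V → Bool, sigmaA B σ * Real.exp (energy β lam (Function.update J B 0) σ)) := by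
  unfold Zfun
  rw [Finset.mul_sum, Finset.mul_sum, ← Finset.sum_add_distrib]
  refine Finset.sum_congr rfl fun σ _ => ?_
  rw [energy_decomp β lam J B σ, Real.exp_add]
  rcases sigmaA_cases B σ with h | h <;> rw [h]
  · rw [mul_one, ← Real.cosh_add_sinh]; ring
  · rw [mul_neg_one, ← Real.cosh_sub_sinh]; ring

lemma Nsum (β : ℝ) (lam J : Finset V → ℝ) (B : Finset V) :
    (∑ σ : V → Bool, sigmaA B σ * Real.exp (energy β lam J σ)) =
      Real.cosh (β * lam B * J B) *
          (∑ σ : V → Bool, sigmaA B σ * Real.exp (energy β lam (Function.update J B 0) σ))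
      + Real.sinh (β * lam B * J B) * Zfun β lam (Function.update J B 0) := by
  unfold Zfun
  rw [Finset.mul_sum, Finset.mul_sum, ← Finset.sum_add_distrib]
  refine Finset.sum_congr rfl fun σ _ => ?_
  rw [energy_decomp β lam J B σ, Real.exp_add]
  rcases sigmaA_cases B σ with h | h <;> rw [h]
  · rw [mul_one, ← Real.cosh_add_sinh]; ring
  · rw [mul_neg_one, ← Real.cosh_sub_sinh]; ring

lemma qtanh_nonneg {a : ℝ} (ha : 0 < a) (x : ℝ) : 0 ≤ qtanh a x := by
  unfold qtanh
  split
  · positivity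
  · rename_i hx
    rcases lt_or_gt_of_ne hx with h | h
    · refine div_nonneg_iff.mpr (Or.inr ⟨h.le, ?_⟩)
      rw [Real.tanh_eq_sinh_div_cosh]
      apply div_nonpos_of_nonpos_of_nonneg _ (Real.cosh_pos _).le
      have hax : a * x < 0 := mul_neg_of_pos_of_neg ha h
      simpa using (Real.sinh_lt_sinh.mpr hax).le
    · apply div_nonneg h.le
      rw [Real.tanh_eq_sinh_div_cosh]
      apply div_nonneg _ (Real.cosh_pos _).le
      have hax : 0 < a * x := mul_pos ha h
      simpa using (Real.sinh_lt_sinh.mpr hax).le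

lemma mul_sinh_nonneg {c : ℝ} (hc : 0 < c) (x : ℝ) : 0 ≤ x * Real.sinh (c * x) := by
  rcases le_or_gt 0 x with h | h
  · refine mul_nonneg h ?_
    have : 0 ≤ c * x := mul_nonneg hc.le h
    simpa using (Real.sinh_le_sinh.mpr this)
  · refine mul_nonneg_iff.mpr (Or.inr ⟨h.le, ?_⟩)
    have : c * x ≤ 0 := (mul_neg_of_pos_of_neg hc h).le
    simpa using (Real.sinh_le_sinh.mpr this)

end Aux

set_option maxHeartbeats 1000000 in
lemma key_pointwise [Fintype V] [DecidableEq V] (β : ℝ) (hβ : 0 < β) (lam : Finset V → ℝ)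
    (B C : Finset V) (hBC : B ≠ C) (hlamB : 0 < lam B) (hlamC : 0 < lam C)
    (J : Finset V → ℝ) :
    0 ≤ J B * (Real.tanh (β * lam B * J B) - corr β lam J B) * qtanh (2 * β * lam C) (J C)
      + (flipJ B J) B * (Real.tanh (β * lam B * (flipJ B J) B) - corr β lam (flipJ B J) B) *
          qtanh (2 * β * lam C) ((flipJ B J) C) := by
  have hfB : flipJ B J B = -(J B) := Function.update_self _ _ _
  have hfC : flipJ B J C = J C := Function.update_of_ne (Ne.symm hBC) _ _
  have hupd : Function.update (flipJ B J) B 0 = Function.update J B 0 := by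
    unfold flipJ; rw [Function.update_idem]
  set h := β * lam B * J B with hh
  set Z0 := Zfun β lam (Function.update J B 0) with hZ0def
  set S := ∑ σ : V → Bool, sigmaA B σ * Real.exp (energy β lam (Function.update J B 0) σ)
    with hSdef
  have hneg : β * lam B * flipJ B J B = -h := by rw [hfB]; ring
  have hZ1 : Zfun β lam J = Real.cosh h * Z0 + Real.sinh h * S := Zsum β lam J B
  have hZ2 : Zfun β lam (flipJ B J) = Real.cosh h * Z0 - Real.sinh h * S := by
    rw [Zsum β lam (flipJ B J) B, hupd, hneg, Real.cosh_neg, Real.sinh_neg,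
      ← hZ0def, ← hSdef]; ring
  have hZ1pos : 0 < Real.cosh h * Z0 + Real.sinh h * S := hZ1 ▸ Zfun_pos β lam J
  have hZ2pos : 0 < Real.cosh h * Z0 - Real.sinh h * S := hZ2 ▸ Zfun_pos β lam (flipJ B J)
  have hc1 : corr β lam J B =
      (Real.cosh h * S + Real.sinh h * Z0) / (Real.cosh h * Z0 + Real.sinh h * S) := by
    unfold corr
    rw [Nsum β lam J B, hZ1, ← hZ0def, ← hSdef, ← hh]
  have hc2 : corr β lam (flipJ B J) B =
      (Real.cosh h * S - Real.sinh h * Z0) / (Real.cosh h * Z0 - Real.sinh h * S) := by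
    unfold corr
    rw [Nsum β lam (flipJ B J) B, hZ2, hupd, hneg, Real.cosh_neg, Real.sinh_neg,
      ← hZ0def, ← hSdef]; ring_nf
  set q := qtanh (2 * β * lam C) (J C) with hq
  have hqnn : 0 ≤ q := qtanh_nonneg (by positivity) _
  rw [hfB, hfC, hc1, hc2, show β * lam B * -J B = -h from by rw [hh]; ring,
    Real.tanh_neg, ← hq]
  have hcpos := Real.cosh_pos h
  have keyeq :
      J B * (Real.tanh h - (Real.cosh h * S + Real.sinh h * Z0) /
          (Real.cosh h * Z0 + Real.sinh h * S)) * q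
        + -(J B) * (-Real.tanh h - (Real.cosh h * S - Real.sinh h * Z0) /
          (Real.cosh h * Z0 - Real.sinh h * S)) * q
      = q * (2 * (J B * Real.sinh h) * S ^ 2 /
          (Real.cosh h * ((Real.cosh h * Z0 + Real.sinh h * S) *
            (Real.cosh h * Z0 - Real.sinh h * S)))) := by
    rw [Real.tanh_eq_sinh_div_cosh]
    have e1 : Real.cosh h * Z0 + Real.sinh h * S ≠ 0 := ne_of_gt hZ1pos
    have e2 : Real.cosh h * Z0 - Real.sinh h * S ≠ 0 := ne_of_gt hZ2pos
    have e3 : Real.cosh h ≠ 0 := ne_of_gt hcpos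
    field_simp
    linear_combination (2 * J B * Real.sinh h * q * S ^ 2) *
      (Real.cosh_sq_sub_sinh_sq h)
  rw [keyeq]
  have hJs : 0 ≤ J B * Real.sinh h := by
    have := mul_sinh_nonneg (show (0:ℝ) < β * lam B by positivity) (J B)
    calc (0:ℝ) ≤ J B * Real.sinh (β * lam B * J B) := by
          have := mul_sinh_nonneg (show (0:ℝ) < β * lam B by positivity) (J B)
          simpa [mul_assoc] using this
      _ = J B * Real.sinh h := by rw [hh]
  apply mul_nonneg hqnn
  apply div_nonneg
  · positivity
  · positivity

lemma flipJ_involutive [DecidableEq V] (B : Finset V) : Function.Involutive (flipJ B) := by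
  intro J
  unfold flipJ
  rw [Function.update_self, neg_neg, Function.update_idem, Function.update_eq_self]

lemma flipJ_measurable [DecidableEq V] (B : Finset V) : Measurable (flipJ (V := V) B) := by
  apply measurable_pi_lambda
  intro A
  by_cases h : A = B
  · subst h
    simp only [flipJ, Function.update_self]
    exact (measurable_pi_apply _).neg
  · simp only [flipJ, Function.update_of_ne h]
    exact measurable_pi_apply _

/-- `flipJ B` as a measurable equivalence. -/
noncomputable def flipE [DecidableEq V] (B : Finset V) : (Finset V → ℝ) ≃ᵐ (Finset V → ℝ) where
  toFun := flipJ B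
  invFun := flipJ B
  left_inv := flipJ_involutive B
  right_inv := flipJ_involutive B
  measurable_toFun := flipJ_measurable B
  measurable_invFun := flipJ_measurable B

lemma flipJ_measurePreserving [Fintype V] [DecidableEq V]
    (P : Finset V → Measure ℝ) [∀ A, IsProbabilityMeasure (P A)] (B : Finset V)
    (hPB : (P B).map (fun x => -x) = P B) :
    MeasurePreserving (flipJ B) (Measure.pi P) (Measure.pi P) := by
  have heq : flipJ (V := V) B =
      fun (J : Finset V → ℝ) A => (fun A x => if A = B then -x else x) A (J A) := by
    funext J A
    unfold flipJ
    rw [Function.update_apply]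
    by_cases h : A = B <;> simp [h]
  rw [heq]
  refine measurePreserving_pi (f := fun A x => if A = B then -x else x) P P fun A => ?_
  by_cases h : A = B
  · subst h
    simp only [if_pos rfl]
    exact ⟨measurable_neg, hPB⟩
  · simp only [if_neg h]
    exact MeasurePreserving.id _

lemma flipJ_comm [DecidableEq V] {B C : Finset V} (hBC : B ≠ C) (J : Finset V → ℝ) :
    flipJ B (flipJ C J) = flipJ C (flipJ B J) := by
  unfold flipJ
  rw [Function.update_of_ne hBC.symm, Function.update_of_ne hBC, Function.update_comm hBC]


/-- Nonnegativity of the bound (Remark after the Corollary). -/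
theorem bound_nonneg [Fintype V] [DecidableEq V]
    (β : ℝ) (hβ : 0 < β) (lam : Finset V → ℝ)
    (P : Finset V → Measure ℝ) [∀ A, IsProbabilityMeasure (P A)]
    (B C : Finset V) (hBC : B ≠ C) (hlamB : 0 < lam B) (hlamC : 0 < lam C)
    (hPB : (P B).map (fun x => -x) = P B)
    (hPC : (P C).map (fun x => -x) = P C)
    (hint : Integrable (fun J =>
      J B * (Real.tanh (β * lam B * J B) - corr β lam J B) * qtanh (2 * β * lam C) (J C) +
      J C * (Real.tanh (β * lam C * J C) - corr β lam J C) * qtanh (2 * β * lam B) (J B))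
      (Measure.pi P)) :
    0 ≤ ∫ J, (J B * (Real.tanh (β * lam B * J B) - corr β lam J B) *
          qtanh (2 * β * lam C) (J C) +
        J C * (Real.tanh (β * lam C * J C) - corr β lam J C) *
          qtanh (2 * β * lam B) (J B)) ∂(Measure.pi P) := by
  set μ := Measure.pi P with hμ
  set F : (Finset V → ℝ) → ℝ := fun J =>
      J B * (Real.tanh (β * lam B * J B) - corr β lam J B) * qtanh (2 * β * lam C) (J C) +
      J C * (Real.tanh (β * lam C * J C) - corr β lam J C) * qtanh (2 * β * lam B) (J B)
    with hF
  have mpB : MeasurePreserving (flipJ B) μ μ := flipJ_measurePreserving P B hPB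
  have mpC : MeasurePreserving (flipJ C) μ μ := flipJ_measurePreserving P C hPC
  have embB : MeasurableEmbedding (flipJ (V := V) B) := (flipE B).measurableEmbedding
  have embC : MeasurableEmbedding (flipJ (V := V) C) := (flipE C).measurableEmbedding
  have mpBC : MeasurePreserving (flipJ B ∘ flipJ C) μ μ := mpB.comp mpC
  have embBC : MeasurableEmbedding (flipJ (V := V) B ∘ flipJ C) := embB.comp embC
  -- integrability of the composed functions
  have iB : Integrable (F ∘ flipJ B) μ := (mpB.integrable_comp_emb embB).mpr hint
  have iC : Integrable (F ∘ flipJ C) μ := (mpC.integrable_comp_emb embC).mpr hint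
  have iBC : Integrable (F ∘ (flipJ B ∘ flipJ C)) μ := (mpBC.integrable_comp_emb embBC).mpr hint
  -- all four integrals agree
  have e1 : ∫ J, F (flipJ B J) ∂μ = ∫ J, F J ∂μ := mpB.integral_comp embB F
  have e2 : ∫ J, F (flipJ C J) ∂μ = ∫ J, F J ∂μ := mpC.integral_comp embC F
  have e3 : ∫ J, F (flipJ B (flipJ C J)) ∂μ = ∫ J, F J ∂μ := mpBC.integral_comp embBC F
  -- pointwise nonnegativity of the fourfold symmetrization
  have pointwise : ∀ J, 0 ≤ F J + F (flipJ B J) + (F (flipJ C J) + F (flipJ B (flipJ C J))) := by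
    intro J
    have k1 := key_pointwise β hβ lam B C hBC hlamB hlamC J
    have k2 := key_pointwise β hβ lam C B hBC.symm hlamC hlamB J
    have k3 := key_pointwise β hβ lam B C hBC hlamB hlamC (flipJ C J)
    have k4 := key_pointwise β hβ lam C B hBC.symm hlamC hlamB (flipJ B J)
    have hcomm : flipJ B (flipJ C J) = flipJ C (flipJ B J) := flipJ_comm hBC J
    simp only [hF]
    rw [hcomm] at k3 ⊢
    linarith [k1, k2, k3, k4]
  have I1 : Integrable (fun J => F J + F (flipJ B J)) μ := hint.add iB
  have I2 : Integrable (fun J => F (flipJ C J) + F (flipJ B (flipJ C J))) μ := iC.add iBC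
  have big : 0 ≤ ∫ J, (F J + F (flipJ B J) + (F (flipJ C J) + F (flipJ B (flipJ C J)))) ∂μ :=
    integral_nonneg pointwise
  have EA : (∫ J, (F J + F (flipJ B J) + (F (flipJ C J) + F (flipJ B (flipJ C J)))) ∂μ)
      = (∫ J, (F J + F (flipJ B J)) ∂μ)
        + (∫ J, (F (flipJ C J) + F (flipJ B (flipJ C J))) ∂μ) :=
    integral_add I1 I2
  have EB : (∫ J, (F J + F (flipJ B J)) ∂μ)
      = (∫ J, F J ∂μ) + (∫ J, F (flipJ B J) ∂μ) := integral_add hint iB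
  have EC : (∫ J, (F (flipJ C J) + F (flipJ B (flipJ C J))) ∂μ)
      = (∫ J, F (flipJ C J) ∂μ) + (∫ J, F (flipJ B (flipJ C J)) ∂μ) := integral_add iC iBC
  show (0:ℝ) ≤ ∫ J, F J ∂μ
  linarith [big, EA, EB, EC, e1, e2, e3]
end
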